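/- Let R and R' be commutative rings with multiplicatively closed subsets S ⊆ R, S' ⊆ R', and let I be an ideal of R. Then I × R' is an (S × S')-n-ideal of R × R' if and only if I is an S-n-ideal of R and S' ∩ √0_{R'} ≠ ∅. -/

import Mathlib

/-- `I` is an `S`-`n`-ideal: `I` is disjoint from `S` and there is `s ∈ S` such that
whenever `a * b ∈ I` and `s * a` is not nilpotent, then `s * b ∈ I`. -/
def IsSnIdeal {R : Type*} [CommRing R] (S : Set R) (I : Ideal R) : Prop :=
  Disjoint S (I : Set R) ∧
    ∃ s ∈ S, ∀ a b : R, a * b ∈ I → s * a ∉ nilradical R → s * b ∈ I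

/-- `I` is an `n`-ideal: `I` is proper and `a * b ∈ I` with `a` not nilpotent implies `b ∈ I`. -/
def IsNIdeal {R : Type*} [CommRing R] (I : Ideal R) : Prop :=
  I ≠ ⊤ ∧ ∀ a b : R, a * b ∈ I → a ∉ nilradical R → b ∈ I

/-- `I` is an `S`-prime ideal. -/
def IsSPrime {R : Type*} [CommRing R] (S : Set R) (I : Ideal R) : Prop :=
  Disjoint S (I : Set R) ∧
    ∃ s ∈ S, ∀ a b : R, a * b ∈ I → s * a ∈ I ∨ s * b ∈ I

lemma prod_isNilpotent_iff {R R' : Type*} [CommRing R] [CommRing R'] (x : R × R') :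
    IsNilpotent x ↔ IsNilpotent x.1 ∧ IsNilpotent x.2 := by
  constructor
  · rintro ⟨n, hn⟩
    exact ⟨⟨n, congrArg Prod.fst hn⟩, ⟨n, congrArg Prod.snd hn⟩⟩
  · rintro ⟨⟨n, hn⟩, ⟨m, hm⟩⟩
    refine ⟨n + m, ?_⟩
    ext
    · simp [pow_add, hn]
    · simp [pow_add, hm]

lemma mem_prod' {R R' : Type*} [CommRing R] [CommRing R'] (I : Ideal R) (J : Ideal R')
    (x : R × R') : x ∈ I.prod J ↔ x.1 ∈ I ∧ x.2 ∈ J := by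
  obtain ⟨r, s⟩ := x; exact Ideal.mem_prod I J

theorem stmt_18 {R R' : Type*} [CommRing R] [CommRing R'] (S : Submonoid R)
    (S' : Submonoid R') (I : Ideal R) :
    IsSnIdeal ((S : Set R) ×ˢ (S' : Set R')) (I.prod (⊤ : Ideal R')) ↔
      IsSnIdeal (S : Set R) I ∧ ((S' : Set R') ∩ (nilradical R' : Set R')).Nonempty := by
  constructor
  · rintro ⟨hdisj, ⟨s, s'⟩, hsS, hprop⟩
    obtain ⟨hs, hs'⟩ := Set.mem_prod.1 hsS
    have hdisj' : Disjoint (S : Set R) (I : Set R) := by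
      rw [Set.disjoint_left] at hdisj ⊢
      rintro x hx hxI
      exact hdisj (Set.mem_prod.2 ⟨hx, S'.one_mem⟩)
        ((mem_prod' I ⊤ (x, 1)).2 ⟨hxI, trivial⟩)
    have hs'nil : IsNilpotent s' := by
      by_contra hnil
      have h := hprop (0, 1) (1, 0) (by simp [mem_prod']) ?_
      · rw [Set.disjoint_left] at hdisj'
        have hsb := ((mem_prod' _ _ _).1 h).1
        simp only [Prod.mk_mul_mk, mul_one, mul_zero] at hsb
        exact hdisj' hs hsb
      · intro hc
        rw [mem_nilradical, prod_isNilpotent_iff] at hc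
        simp only [Prod.mk_mul_mk, mul_zero, mul_one] at hc
        exact hnil hc.2
    refine ⟨⟨hdisj', s, hs, fun a b hab hna => ?_⟩, s', hs', mem_nilradical.2 hs'nil⟩
    have h := hprop (a, 1) (b, 1) (by simp [mem_prod', hab]) ?_
    · have := ((mem_prod' _ _ _).1 h).1
      simpa using this
    · intro hc
      rw [mem_nilradical, prod_isNilpotent_iff] at hc
      exact hna (mem_nilradical.2 hc.1)
  · rintro ⟨⟨hdisj, s, hs, hprop⟩, t, htS', htnil⟩
    refine ⟨?_, ⟨s, t⟩, Set.mem_prod.2 ⟨hs, htS'⟩, ?_⟩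
    · rw [Set.disjoint_left] at hdisj ⊢
      rintro ⟨x, y⟩ hxy hxyI
      exact hdisj (Set.mem_prod.1 hxy).1 ((mem_prod' _ _ _).1 hxyI).1
    · rintro ⟨a, a'⟩ ⟨b, b'⟩ hab hna
      have hab1 : a * b ∈ I := ((mem_prod' _ _ _).1 hab).1
      have hsa : s * a ∉ nilradical R := by
        intro hc
        apply hna
        rw [mem_nilradical, prod_isNilpotent_iff]
        exact ⟨mem_nilradical.1 hc,
          (Commute.all t a').isNilpotent_mul_right (mem_nilradical.1 htnil)⟩
      exact (mem_prod' _ _ _).2 ⟨hprop a b hab1 hsa, trivial⟩
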